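/- Let M ≥ 2, let λ ∈ ℝ with |λ| < 2√M, and let z_λ be the fixed point of z ↦ −1/(Mz+λ) in the upper half plane. Define w(z) = |z − z_λ|²/(Im(z)·Im(z_λ)) and φ(z₁,…,z_M) = −1/(z₁+⋯+z_M+λ). Then for all z₁,…,z_M in the upper half plane, not all equal to z_λ, M·w(φ(z₁,…,z_M)) ≤ w(z₁) + ⋯ + w(z_M). -/

import Mathlib

theorem stmt9 (M : ℕ) (hM : 2 ≤ M) (lam : ℝ) (hlam : |lam| < 2 * Real.sqrt M)
    (z : Fin M → ℂ) (hz : ∀ i, 0 < (z i).im)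
    (hne : ¬ ∀ i, z i = -(lam : ℂ) / (2 * M) +
      (Complex.I / (2 * M)) * (Real.sqrt (4 * M - lam ^ 2) : ℂ)) :
    let zlam : ℂ := -(lam : ℂ) / (2 * M) +
      (Complex.I / (2 * M)) * (Real.sqrt (4 * M - lam ^ 2) : ℂ)
    let w : ℂ → ℝ := fun u => ‖u - zlam‖ ^ 2 / (u.im * zlam.im)
    (M : ℝ) * w (-1 / (∑ i, z i + lam)) ≤ ∑ i, w (z i) := by
  intro zlam w
  set s : ℝ := Real.sqrt (4 * M - lam ^ 2) with hs
  have hM2 : (2:ℝ) ≤ M := by exact_mod_cast hM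
  have hMpos : (0:ℝ) < M := by linarith
  have hMne : ((M:ℂ)) ≠ 0 := by exact_mod_cast hMpos.ne'
  have h4M : lam ^ 2 < 4 * M := by
    have h1 : |lam| ^ 2 < (2 * Real.sqrt M) ^ 2 :=
      pow_lt_pow_left₀ hlam (abs_nonneg _) two_ne_zero
    rw [sq_abs, mul_pow, Real.sq_sqrt hMpos.le] at h1
    linarith
  have hspos : 0 < s := Real.sqrt_pos.mpr (by linarith)
  have hs2 : s ^ 2 = 4 * M - lam ^ 2 := Real.sq_sqrt (by linarith)
  have hmk : zlam = Complex.ofReal (-lam/(2*M)) + Complex.ofReal (s/(2*M)) * Complex.I := by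
    simp only [zlam]
    push_cast
    field_simp
    ring
  have hre : zlam.re = -lam / (2*M) := by
    rw [hmk]
    simp only [Complex.add_re, Complex.ofReal_re, Complex.mul_re, Complex.ofReal_im,
      Complex.I_re, Complex.I_im]
    ring
  have him : zlam.im = s / (2*M) := by
    rw [hmk]
    simp only [Complex.add_im, Complex.ofReal_im, Complex.mul_im, Complex.ofReal_re,
      Complex.I_re, Complex.I_im]
    ring
  have himpos : 0 < zlam.im := by rw [him]; positivity
  have hnormSq : Complex.normSq zlam = 1 / M := by
    rw [Complex.normSq_apply, hre, him]
    field_simp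
    nlinarith [hs2]
  have hquad : (M:ℂ) * zlam^2 + lam * zlam + 1 = 0 := by
    have hIc : Complex.I^2 = -1 := Complex.I_sq
    have hsc : (s:ℂ)^2 = 4*M - lam^2 := by exact_mod_cast congrArg Complex.ofReal hs2
    rw [hmk]
    push_cast
    field_simp
    linear_combination (s:ℂ)^2 * hIc - hsc
  set S : ℂ := ∑ i, z i with hS
  have hT : S.im = ∑ i, (z i).im := by simp [hS]
  have hTpos : 0 < S.im := by
    rw [hT]
    exact Finset.sum_pos (fun i _ => hz i) ⟨⟨0, by omega⟩, Finset.mem_univ _⟩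
  have hv_im : (S + (lam:ℂ)).im = S.im := by simp
  have hvne : S + (lam:ℂ) ≠ 0 := by
    intro h
    rw [h] at hv_im
    simp at hv_im
    exact hTpos.ne' hv_im.symm
  set u : ℂ := -1 / (S + lam) with hu
  have hNpos : 0 < Complex.normSq (S + lam) := Complex.normSq_pos.mpr hvne
  have hu_im : u.im = S.im / Complex.normSq (S + lam) := by
    rw [hu, div_eq_mul_inv, neg_one_mul, Complex.neg_im, Complex.inv_im, hv_im]
    ring
  have hkey : u - zlam = -(zlam * (S - M * zlam)) / (S + lam) := by
    rw [hu]
    field_simp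
    linear_combination -hquad
  set A : ℝ := ‖S - M * zlam‖ with hA
  set N : ℝ := Complex.normSq (S + lam) with hNdef
  have habs : ‖u - zlam‖ ^ 2 = (1/M) * A^2 / N := by
    rw [hkey, norm_div, norm_neg, norm_mul, div_pow, mul_pow,
      Complex.sq_norm zlam, hnormSq, Complex.sq_norm (S + (lam:ℂ)), ← hNdef, ← hA]
  have hwu : (M:ℝ) * w u = A^2 / (S.im * zlam.im) := by
    have hNne : N ≠ 0 := hNpos.ne'
    have hTne : S.im ≠ 0 := hTpos.ne'
    have hbne : zlam.im ≠ 0 := himpos.ne'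
    have hMne' : (M:ℝ) ≠ 0 := hMpos.ne'
    simp only [w]
    rw [habs, hu_im]
    field_simp
  have hsum : S - M * zlam = ∑ i, (z i - zlam) := by
    rw [Finset.sum_sub_distrib, ← hS]
    simp
  have hAle : A ≤ ∑ i, ‖z i - zlam‖ := by
    rw [hA, hsum]
    exact norm_sum_le _ _
  calc (M:ℝ) * w u = A^2 / (S.im * zlam.im) := hwu
    _ ≤ (∑ i, ‖z i - zlam‖)^2 / (S.im * zlam.im) := by
        gcongr
    _ = ((∑ i, ‖z i - zlam‖)^2 / ∑ i, (z i).im) / zlam.im := by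
        rw [div_div, hT]
    _ ≤ (∑ i, ‖z i - zlam‖^2 / (z i).im) / zlam.im := by
        apply div_le_div_of_nonneg_right ?_ himpos.le
        exact Finset.sq_sum_div_le_sum_sq_div _ _ (fun i _ => hz i)
    _ = ∑ i, w (z i) := by
        rw [Finset.sum_div]
        simp only [w, div_div]
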